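/- Let K ≥ 2, σ : Fin K → ℝ positive, and let E be the simplex of probability vectors e on Fin K. Then sup_{e ∈ E} inf_{w ∈ W} ∑_a e(a) √((σ a)²/(w a)) ≥ inf_{w ∈ W'} max_a √((σ a)²/(w a)), where W is the open simplex (all coordinates in (0,1) summing to 1) and W' is its closure. Moreover the right-hand side equals √(∑_a (σ a)²). -/

import Mathlib

open Finset

-- Auxiliary lemma: for any w in the simplex with positive coordinates,
-- √(∑ σ²) ≤ ∑ (σa²/S) · √(σa²/wa)   (Hölder via two Cauchy–Schwarz applications)
lemma aux_holder {K : ℕ} (hK : 2 ≤ K) (σ : Fin K → ℝ) (hσ : ∀ a, 0 < σ a)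
    (w : Fin K → ℝ) (hw : ∀ a, 0 < w a) (hw1 : ∑ a, w a = 1) :
    Real.sqrt (∑ a, (σ a) ^ 2) ≤
      ∑ a, ((σ a) ^ 2 / (∑ b, (σ b) ^ 2)) * Real.sqrt ((σ a) ^ 2 / w a) := by
  set S := ∑ a, (σ a) ^ 2 with hSdef
  have hne : Nonempty (Fin K) := Fin.pos_iff_nonempty.mp (by omega)
  have hS : 0 < S := Finset.sum_pos (fun a _ => pow_pos (hσ a) 2) Finset.univ_nonempty
  -- rewrite √(σa²/wa) = σa/√wa
  have hsq : ∀ a, Real.sqrt ((σ a) ^ 2 / w a) = σ a / Real.sqrt (w a) := by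
    intro a
    rw [Real.sqrt_div (sq_nonneg _), Real.sqrt_sq (hσ a).le]
  set T := ∑ a, (σ a) ^ 3 / Real.sqrt (w a) with hTdef
  set U := ∑ a, σ a * Real.sqrt (w a) with hUdef
  have hT0 : 0 ≤ T := Finset.sum_nonneg fun a _ =>
    div_nonneg (pow_nonneg (hσ a).le 3) (Real.sqrt_nonneg _)
  have hU0 : 0 ≤ U := Finset.sum_nonneg fun a _ =>
    mul_nonneg (hσ a).le (Real.sqrt_nonneg _)
  -- Cauchy–Schwarz 1 : S² ≤ T * U
  have cs1 : S ^ 2 ≤ T * U := by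
    have := Finset.sum_mul_sq_le_sq_mul_sq Finset.univ
      (fun a => σ a * Real.sqrt (σ a) / Real.sqrt (Real.sqrt (w a)))
      (fun a => Real.sqrt (σ a) * Real.sqrt (Real.sqrt (w a)))
    have h1 : ∀ a : Fin K,
        (σ a * Real.sqrt (σ a) / Real.sqrt (Real.sqrt (w a))) *
          (Real.sqrt (σ a) * Real.sqrt (Real.sqrt (w a))) = (σ a) ^ 2 := by
      intro a
      have hwa : (0:ℝ) < Real.sqrt (Real.sqrt (w a)) := Real.sqrt_pos.mpr
        (Real.sqrt_pos.mpr (hw a))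
      field_simp
      rw [Real.sq_sqrt (hσ a).le]
      ring
    have h2 : ∀ a : Fin K,
        (σ a * Real.sqrt (σ a) / Real.sqrt (Real.sqrt (w a))) ^ 2
          = (σ a) ^ 3 / Real.sqrt (w a) := by
      intro a
      rw [div_pow, mul_pow, Real.sq_sqrt (hσ a).le,
        Real.sq_sqrt (Real.sqrt_nonneg _)]
      ring
    have h3 : ∀ a : Fin K,
        (Real.sqrt (σ a) * Real.sqrt (Real.sqrt (w a))) ^ 2
          = σ a * Real.sqrt (w a) := by
      intro a
      rw [mul_pow, Real.sq_sqrt (hσ a).le, Real.sq_sqrt (Real.sqrt_nonneg _)]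
    simp only [h1, h2, h3] at this
    exact this
  -- Cauchy–Schwarz 2 : U² ≤ S
  have cs2 : U ^ 2 ≤ S := by
    have := Finset.sum_mul_sq_le_sq_mul_sq Finset.univ
      (fun a => σ a) (fun a => Real.sqrt (w a))
    calc U ^ 2 ≤ (∑ a, (σ a) ^ 2) * ∑ a, (Real.sqrt (w a)) ^ 2 := this
      _ = S := by
          have : ∑ a, (Real.sqrt (w a)) ^ 2 = ∑ a, w a := by
            apply Finset.sum_congr rfl
            intro a _
            exact Real.sq_sqrt (hw a).le
          rw [this, hw1, mul_one]
  have hU_le : U ≤ Real.sqrt S := by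
    have := Real.sqrt_le_sqrt cs2
    rwa [Real.sqrt_sq hU0] at this
  -- conclude T ≥ S * √S
  have hsqrtS : 0 < Real.sqrt S := Real.sqrt_pos.mpr hS
  have hT_ge : S * Real.sqrt S ≤ T := by
    have hTU : S ^ 2 ≤ T * Real.sqrt S := by
      calc S ^ 2 ≤ T * U := cs1
        _ ≤ T * Real.sqrt S := by
            exact mul_le_mul_of_nonneg_left hU_le hT0
    have : S ^ 2 / Real.sqrt S ≤ T := (div_le_iff₀ hsqrtS).mpr hTU
    calc S * Real.sqrt S = S ^ 2 / Real.sqrt S := by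
          rw [eq_div_iff hsqrtS.ne']
          rw [mul_assoc, Real.mul_self_sqrt hS.le]
          ring
      _ ≤ T := this
  -- final computation
  have hsum : ∑ a, ((σ a) ^ 2 / S) * Real.sqrt ((σ a) ^ 2 / w a) = T / S := by
    rw [hTdef, Finset.sum_div]
    apply Finset.sum_congr rfl
    intro a _
    rw [hsq a]
    field_simp
  rw [hsum, le_div_iff₀ hS]
  calc Real.sqrt S * S = S * Real.sqrt S := mul_comm _ _
    _ ≤ T := hT_ge

theorem minimax_step (K : ℕ) (hK : 2 ≤ K) (σ : Fin K → ℝ) (hσ : ∀ a, 0 < σ a) :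
    (sInf {y : ℝ | ∃ w : Fin K → ℝ, (∀ a, w a ∈ Set.Icc (0 : ℝ) 1) ∧ (∀ a, 0 < w a) ∧
          (∑ a, w a = 1) ∧ y = ⨆ a, Real.sqrt ((σ a) ^ 2 / w a)}
        ≤ sSup {x : ℝ | ∃ e : Fin K → ℝ, (∀ a, 0 ≤ e a) ∧ (∑ a, e a = 1) ∧
          x = sInf {y : ℝ | ∃ w : Fin K → ℝ, (∀ a, w a ∈ Set.Ioo (0 : ℝ) 1) ∧
            (∑ a, w a = 1) ∧ y = ∑ a, e a * Real.sqrt ((σ a) ^ 2 / w a)}}) ∧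
    sInf {y : ℝ | ∃ w : Fin K → ℝ, (∀ a, w a ∈ Set.Icc (0 : ℝ) 1) ∧ (∀ a, 0 < w a) ∧
          (∑ a, w a = 1) ∧ y = ⨆ a, Real.sqrt ((σ a) ^ 2 / w a)}
      = Real.sqrt (∑ a, (σ a) ^ 2) := by
  have hne : Nonempty (Fin K) := Fin.pos_iff_nonempty.mp (by omega)
  set S := ∑ a, (σ a) ^ 2 with hSdef
  have hS : 0 < S := Finset.sum_pos (fun a _ => pow_pos (hσ a) 2) Finset.univ_nonempty
  have hsqrtS : 0 < Real.sqrt S := Real.sqrt_pos.mpr hS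
  set A := {y : ℝ | ∃ w : Fin K → ℝ, (∀ a, w a ∈ Set.Icc (0 : ℝ) 1) ∧ (∀ a, 0 < w a) ∧
      (∑ a, w a = 1) ∧ y = ⨆ a, Real.sqrt ((σ a) ^ 2 / w a)} with hAdef
  -- lower bound on elements of A
  have hlow : ∀ y ∈ A, Real.sqrt S ≤ y := by
    rintro y ⟨w, hIcc, hpos, hsum, rfl⟩
    -- there is an arm with w a ≤ σa²/S
    have hex : ∃ a : Fin K, w a ≤ (σ a) ^ 2 / S := by
      by_contra h
      push_neg at h
      have : (1:ℝ) < ∑ a, w a := by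
        calc (1:ℝ) = ∑ a, (σ a) ^ 2 / S := by
              rw [← Finset.sum_div, ← hSdef, div_self hS.ne']
          _ < ∑ a, w a := Finset.sum_lt_sum_of_nonempty Finset.univ_nonempty
              (fun a _ => h a)
      rw [hsum] at this
      exact absurd this (by norm_num)
    obtain ⟨a, ha⟩ := hex
    have h1 : S ≤ (σ a) ^ 2 / w a := by
      rw [le_div_iff₀ (hpos a)]
      calc S * w a ≤ S * ((σ a) ^ 2 / S) := by
            exact mul_le_mul_of_nonneg_left ha hS.le
        _ = (σ a) ^ 2 := by field_simp
    calc Real.sqrt S ≤ Real.sqrt ((σ a) ^ 2 / w a) := Real.sqrt_le_sqrt h1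
      _ ≤ ⨆ b, Real.sqrt ((σ b) ^ 2 / w b) :=
          le_ciSup (f := fun b => Real.sqrt ((σ b) ^ 2 / w b))
            (Set.Finite.bddAbove (Set.finite_range _)) a
  -- membership of √S in A
  have hmem : Real.sqrt S ∈ A := by
    refine ⟨fun a => (σ a) ^ 2 / S, ?_, ?_, ?_, ?_⟩
    · intro a
      constructor
      · positivity
      · rw [div_le_one hS]
        exact Finset.single_le_sum (fun b _ => (sq_nonneg (σ b))) (Finset.mem_univ a)
    · intro a; exact div_pos (pow_pos (hσ a) 2) hS
    · rw [← Finset.sum_div, ← hSdef, div_self hS.ne']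
    · have : ∀ a : Fin K, Real.sqrt ((σ a) ^ 2 / ((σ a) ^ 2 / S)) = Real.sqrt S := by
        intro a
        congr 1
        have h1 : ((σ a) ^ 2 : ℝ) ≠ 0 := pow_ne_zero 2 (hσ a).ne'
        field_simp
        exact div_self (hσ a).ne'
      rw [show (⨆ a, Real.sqrt ((σ a) ^ 2 / ((σ a) ^ 2 / S))) = ⨆ _ : Fin K, Real.sqrt S from
        by exact iSup_congr this, ciSup_const]
  have hsecond : sInf A = Real.sqrt S :=
    le_antisymm (csInf_le ⟨Real.sqrt S, hlow⟩ hmem) (le_csInf ⟨_, hmem⟩ hlow)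
  refine ⟨?_, hsecond⟩
  rw [hsecond]
  -- now show √S ≤ sSup B
  set B := {x : ℝ | ∃ e : Fin K → ℝ, (∀ a, 0 ≤ e a) ∧ (∑ a, e a = 1) ∧
      x = sInf {y : ℝ | ∃ w : Fin K → ℝ, (∀ a, w a ∈ Set.Ioo (0 : ℝ) 1) ∧
        (∑ a, w a = 1) ∧ y = ∑ a, e a * Real.sqrt ((σ a) ^ 2 / w a)}} with hBdef
  have hKpos : (0:ℝ) < K := by positivity
  have huKmem : ∀ _ : Fin K, (1:ℝ)/K ∈ Set.Ioo (0:ℝ) 1 := by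
    intro _
    constructor
    · positivity
    · rw [div_lt_one hKpos]
      exact_mod_cast by omega
  have huKsum : ∑ _ : Fin K, (1:ℝ)/K = 1 := by
    rw [Finset.sum_const, Finset.card_univ, Fintype.card_fin, nsmul_eq_mul]
    field_simp
  -- B is bounded above
  have hBdd : BddAbove B := by
    refine ⟨(∑ a, σ a) * Real.sqrt K, ?_⟩
    rintro x ⟨e, he0, he1, rfl⟩
    have hmemY : (∑ a, e a * Real.sqrt ((σ a) ^ 2 / ((1:ℝ)/K))) ∈
        {y : ℝ | ∃ w : Fin K → ℝ, (∀ a, w a ∈ Set.Ioo (0 : ℝ) 1) ∧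
          (∑ a, w a = 1) ∧ y = ∑ a, e a * Real.sqrt ((σ a) ^ 2 / w a)} :=
      ⟨fun _ => (1:ℝ)/K, huKmem, huKsum, rfl⟩
    have hbb : BddBelow {y : ℝ | ∃ w : Fin K → ℝ, (∀ a, w a ∈ Set.Ioo (0 : ℝ) 1) ∧
        (∑ a, w a = 1) ∧ y = ∑ a, e a * Real.sqrt ((σ a) ^ 2 / w a)} := by
      refine ⟨0, ?_⟩
      rintro y ⟨w, hw, hwsum, rfl⟩
      exact Finset.sum_nonneg fun a _ => mul_nonneg (he0 a) (Real.sqrt_nonneg _)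
    calc sInf _ ≤ ∑ a, e a * Real.sqrt ((σ a) ^ 2 / ((1:ℝ)/K)) := csInf_le hbb hmemY
      _ ≤ ∑ a, e a * ((∑ b, σ b) * Real.sqrt K) := by
          apply Finset.sum_le_sum
          intro a _
          apply mul_le_mul_of_nonneg_left _ (he0 a)
          rw [div_div_eq_mul_div, div_one, Real.sqrt_mul (sq_nonneg _),
            Real.sqrt_sq (hσ a).le]
          apply mul_le_mul_of_nonneg_right _ (Real.sqrt_nonneg _)
          exact Finset.single_le_sum (fun b _ => (hσ b).le) (Finset.mem_univ a)
      _ = (∑ a, σ a) * Real.sqrt K := by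
          rw [← Finset.sum_mul, he1, one_mul]
  -- the witness e
  have hxmem : sInf {y : ℝ | ∃ w : Fin K → ℝ, (∀ a, w a ∈ Set.Ioo (0 : ℝ) 1) ∧
      (∑ a, w a = 1) ∧ y = ∑ a, ((σ a) ^ 2 / S) * Real.sqrt ((σ a) ^ 2 / w a)} ∈ B := by
    refine ⟨fun a => (σ a) ^ 2 / S, fun a => (div_pos (pow_pos (hσ a) 2) hS).le, ?_, rfl⟩
    rw [← Finset.sum_div, ← hSdef, div_self hS.ne']
  have hxge : Real.sqrt S ≤ sInf {y : ℝ | ∃ w : Fin K → ℝ, (∀ a, w a ∈ Set.Ioo (0 : ℝ) 1) ∧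
      (∑ a, w a = 1) ∧ y = ∑ a, ((σ a) ^ 2 / S) * Real.sqrt ((σ a) ^ 2 / w a)} := by
    apply le_csInf
    · exact ⟨_, fun _ => (1:ℝ)/K, huKmem, huKsum, rfl⟩
    · rintro y ⟨w, hw, hwsum, rfl⟩
      exact aux_holder hK σ hσ w (fun a => (hw a).1) hwsum
  exact le_trans hxge (le_csSup hBdd hxmem)
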